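/- Let Φ be a consolidation of F, let F' ⊆ F, let P_s ∈ Φ with P_s ∩ F' = {f}, and suppose there exist t and g with f, g ∈ F ∩ O_t and g ∉ P_s. Then Φ \ {P_s} is a consolidation of F'. -/
import Mathlib


open Finset

/-- `Φ` is a consolidation of `F` (with respect to optimal balls `O` and value `OPT`):
it covers `F`, each member has diameter at most `2·OPT`, and any two points of `F`
lying in a common optimal ball lie together in some member. -/
def IsConsolidation {C : Type*} [MetricSpace C] {k : ℕ} (OPT : ℝ)
    (O : Fin k → Set C) (F : Set C) (Φ : Finset (Set C)) : Prop :=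
  (∀ f ∈ F, ∃ P ∈ Φ, f ∈ P) ∧
  (∀ P ∈ Φ, ∀ x ∈ P, ∀ y ∈ P, dist x y ≤ 2 * OPT) ∧
  (∀ t : Fin k, ∀ f ∈ F ∩ O t, ∀ f' ∈ F ∩ O t, ∃ P ∈ Φ, f ∈ P ∧ f' ∈ P)

/-- The consolidation number `Γ(F)`: minimum cardinality of a consolidation of `F`. -/
noncomputable def consolidationNumber {C : Type*} [MetricSpace C] {k : ℕ} (OPT : ℝ)
    (O : Fin k → Set C) (F : Set C) : ℕ :=
  sInf {n : ℕ | ∃ Φ : Finset (Set C), IsConsolidation OPT O F Φ ∧ Φ.card = n}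

-- If `Pₛ ∩ F' = {f}` and `f, g ∈ F ∩ O t` with `g ∉ Pₛ`, then
-- `Φ \ {Pₛ}` is a consolidation of `F' ⊆ F`.
open Classical in
theorem stmt6 {C : Type*} [MetricSpace C] {k : ℕ} (OPT : ℝ)
    (O : Fin k → Set C) (F F' : Set C) (hsub : F' ⊆ F)
    (Φ : Finset (Set C)) (hΦ : IsConsolidation OPT O F Φ)
    (Ps : Set C) (hPs : Ps ∈ Φ) (f : C) (hsing : Ps ∩ F' = {f})
    (hfg : ∃ t : Fin k, ∃ g, f ∈ F ∩ O t ∧ g ∈ F ∩ O t ∧ g ∉ Ps) :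
    IsConsolidation OPT O F' (Φ.erase Ps) := by
  obtain ⟨hcov, hdiam, hpair⟩ := hΦ
  obtain ⟨t, g, hf, hg, hgPs⟩ := hfg
  -- There is Q ∈ Φ containing f and g; since g ∉ Ps, Q ≠ Ps.
  obtain ⟨Q, hQΦ, hfQ, hgQ⟩ := hpair t f hf g hg
  have hQne : Q ≠ Ps := fun h => hgPs (h ▸ hgQ)
  refine ⟨?_, ?_, ?_⟩
  · intro x hx
    by_cases hxf : x = f
    · exact ⟨Q, Finset.mem_erase.mpr ⟨hQne, hQΦ⟩, hxf ▸ hfQ⟩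
    · obtain ⟨P, hPΦ, hxP⟩ := hcov x (hsub hx)
      have hPne : P ≠ Ps := by
        intro h
        exact hxf (Set.mem_singleton_iff.mp (hsing ▸ Set.mem_inter (h ▸ hxP) hx))
      exact ⟨P, Finset.mem_erase.mpr ⟨hPne, hPΦ⟩, hxP⟩
  · intro P hP x hx y hy
    exact hdiam P (Finset.mem_of_mem_erase hP) x hx y hy
  · intro s f1 hf1 f2 hf2
    obtain ⟨P, hPΦ, hf1P, hf2P⟩ := hpair s f1 ⟨hsub hf1.1, hf1.2⟩ f2 ⟨hsub hf2.1, hf2.2⟩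
    by_cases hPne : P = Ps
    · have h1 : f1 = f :=
        Set.mem_singleton_iff.mp (hsing ▸ Set.mem_inter (hPne ▸ hf1P) hf1.1)
      have h2 : f2 = f :=
        Set.mem_singleton_iff.mp (hsing ▸ Set.mem_inter (hPne ▸ hf2P) hf2.1)
      exact ⟨Q, Finset.mem_erase.mpr ⟨hQne, hQΦ⟩, h1 ▸ hfQ, h2 ▸ hfQ⟩
    · exact ⟨P, Finset.mem_erase.mpr ⟨hPne, hPΦ⟩, hf1P, hf2P⟩
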